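/- Bounded self-certification fails while the Scott limit succeeds: no element of any B_T is a fixed point of F, whereas p_ω (defined by p_ω(k) = p_{k+1}(k)) satisfies F(p_ω) = p_ω and p_ω ∉ ⋃_{T ∈ ℕ} B_T. -/

import Mathlib

/-- Membership in the domain `D`: monotone partial halting observations. -/
def InD (p : ℕ → Option Bool) : Prop :=
  ∀ k k', p k = some true → k ≤ k' → p k' = some true

/-- The flat pointwise information order on partial functions. -/
def InfoLe (p q : ℕ → Option Bool) : Prop :=
  ∀ k b, p k = some b → q k = some b

/-- The operator `F` determined by the halting witness `h`. -/
def F (h : ℕ → Bool) (p : ℕ → Option Bool) : ℕ → Option Bool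
  | 0 => some (h 0)
  | k + 1 =>
    match p k with
    | none => none
    | some true => some true
    | some false => some (h (k + 1))

/-- The Kleene chain `p₀ = ⊥`, `p_{n+1} = F p_n`. -/
def chain (h : ℕ → Bool) : ℕ → ℕ → Option Bool
  | 0 => fun _ => none
  | n + 1 => F h (chain h n)

/-- The pointwise supremum of the chain. -/
def pOmega (h : ℕ → Bool) (k : ℕ) : Option Bool := chain h (k + 1) k

/-- `B_T`: elements of `D` defined exactly on `{0, …, T-1}`. -/
def BT (T : ℕ) (p : ℕ → Option Bool) : Prop :=
  InD p ∧ ∀ k, p k ≠ none ↔ k < T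

lemma chain_stab (h : ℕ → Bool) : ∀ n k, k < n → chain h n k = chain h (k + 1) k := by
  intro n
  induction n with
  | zero => intro k hk; omega
  | succ n ih =>
    intro k hk
    cases k with
    | zero =>
      cases n with
      | zero => rfl
      | succ m => simp [chain, F]
    | succ k =>
      have hk' : k < n := by omega
      show F h (chain h n) (k + 1) = F h (chain h (k + 1)) (k + 1)
      simp only [F, ih k hk']

lemma pOmega_isSome (h : ℕ → Bool) : ∀ k, ∃ b, pOmega h k = some b := by
  intro k
  induction k with
  | zero => exact ⟨h 0, rfl⟩
  | succ k ih =>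
    obtain ⟨b, hb⟩ := ih
    simp only [pOmega] at hb
    show ∃ b', F h (chain h (k + 1)) (k + 1) = some b'
    simp only [F, hb]
    cases b <;> simp

theorem bounded_fails_limit_succeeds (h : ℕ → Bool)
    (hm : ∀ k k', h k = true → k ≤ k' → h k' = true) :
    (∀ T : ℕ, ∀ p : ℕ → Option Bool, BT T p → F h p ≠ p) ∧
    F h (pOmega h) = pOmega h ∧
    pOmega h ∉ ⋃ T : ℕ, {p : ℕ → Option Bool | BT T p} := by
  refine ⟨?_, ?_, ?_⟩
  · intro T p ⟨_, hdom⟩ hfix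
    cases T with
    | zero =>
      have h0 : p 0 = none := by
        by_contra hc; exact absurd ((hdom 0).mp hc) (by omega)
      have : F h p 0 = p 0 := congrFun hfix 0
      rw [h0] at this; exact Option.some_ne_none _ this
    | succ T =>
      have hT : p T ≠ none := (hdom T).mpr (by omega)
      have hTs : p (T + 1) = none := by
        by_contra hc; exact absurd ((hdom (T + 1)).mp hc) (by omega)
      have : F h p (T + 1) = p (T + 1) := congrFun hfix (T + 1)
      rw [hTs] at this
      obtain ⟨b, hb⟩ := Option.ne_none_iff_exists'.mp hT
      simp only [F, hb] at this
      cases b <;> simp at this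
  · funext k
    cases k with
    | zero => rfl
    | succ k =>
      show F h (pOmega h) (k + 1) = chain h (k + 2) (k + 1)
      show _ = F h (chain h (k + 1)) (k + 1)
      simp only [F, pOmega]
  · intro hmem
    simp only [Set.mem_iUnion, Set.mem_setOf_eq] at hmem
    obtain ⟨T, _, hdom⟩ := hmem
    obtain ⟨b, hb⟩ := pOmega_isSome h T
    have : pOmega h T ≠ none := by rw [hb]; exact Option.some_ne_none b
    exact absurd ((hdom T).mp this) (by omega)
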